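/- arXiv:2505.16812 — 2 statements merged into one kernel-verified Lean document; each statement's English description precedes it below -/
import Mathlib

section
/- Let $K:\mathbb{Z}^n\times\mathbb{Z}^n\to\mathbb{C}$ satisfy $\sum_k \big(\sum_m |K(k,m)|^{p_2}\big)^{r/p_2} < \infty$ for some $0<r\le 1$ and $1\le p_2<\infty$. Then the operator $A:\ell^{p_1}(\mathbb{Z}^n)\to\ell^{p_2}(\mathbb{Z}^n)$ defined by $(Af)(m) = \sum_k f(k) K(k,m)$ is $r$-nuclear, for any $1\le p_1<\infty$. -/
open scoped ENNReal

/-- An operator `A : ℓ^{p₁}(ι) → ℓ^{p₂}(ι)` is `r`-nuclear (`0 < r ≤ 1`),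
where `p₁'` is the conjugate exponent of `p₁`, if it admits a decomposition
`A f = ∑_j g_j ⟨h_j, f⟩` with `g_j ∈ ℓ^{p₂}`, `h_j ∈ ℓ^{p₁'}` and
`∑_j ‖g_j‖^r ‖h_j‖^r < ∞`. -/
def IsRNuclear {ι : Type*} (p₁ p₁' p₂ : ℝ≥0∞) [Fact (1 ≤ p₁)] [Fact (1 ≤ p₁')]
    [Fact (1 ≤ p₂)] (r : ℝ)
    (A : lp (fun _ : ι => ℂ) p₁ →L[ℂ] lp (fun _ : ι => ℂ) p₂) : Prop :=
  ∃ (g : ℕ → lp (fun _ : ι => ℂ) p₂) (h : ℕ → lp (fun _ : ι => ℂ) p₁'),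
    (∀ (f : lp (fun _ : ι => ℂ) p₁) (m : ι),
      (A f : ι → ℂ) m = ∑' j : ℕ, g j m * ∑' k : ι, h j k * f k) ∧
    Summable (fun j : ℕ => ‖g j‖ ^ r * ‖h j‖ ^ r)

section Aux
variable {ι : Type*} (p : ℝ≥0∞) [Fact (1 ≤ p)]

noncomputable def evalCLM (m : ι) : lp (fun _ : ι => ℂ) p →L[ℂ] ℂ :=
  LinearMap.mkContinuous
    { toFun := fun f => f m
      map_add' := fun f g => by simp [lp.coeFn_add]
      map_smul' := fun c f => by simp [lp.coeFn_smul] }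
    1 (fun f => by
      show ‖(f : ι → ℂ) m‖ ≤ 1 * ‖f‖; simpa using lp.norm_apply_le_norm
        (by have := (Fact.out : (1:ℝ≥0∞) ≤ p); exact fun h => by simp [h] at this) f m)

@[simp] lemma evalCLM_apply (m : ι) (f : lp (fun _ : ι => ℂ) p) : evalCLM p m f = f m := rfl

lemma evalCLM_norm_le (m : ι) : ‖(evalCLM p m : lp (fun _ : ι => ℂ) p →L[ℂ] ℂ)‖ ≤ 1 :=
  LinearMap.mkContinuous_norm_le _ zero_le_one _

lemma norm_lp_single_one_le [DecidableEq ι] [Nonempty ι] (k : ι) :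
    ‖(lp.single p k 1 : lp (fun _ : ι => ℂ) p)‖ ≤ 1 := by
  rcases eq_or_ne p ⊤ with hp | hp
  · subst hp
    have : ‖(lp.single ⊤ k (1:ℂ) : lp (fun _ : ι => ℂ) ⊤)‖ = ⨆ j, ‖(lp.single ⊤ k (1:ℂ) : lp (fun _ : ι => ℂ) ⊤) j‖ := lp.norm_eq_ciSup _
    rw [this]
    refine ciSup_le fun j => ?_
    rcases eq_or_ne j k with rfl | hjk
    · simp [lp.single_apply_self]
    · simp [lp.single_apply_ne _ _ _ hjk, Pi.single_apply, hjk]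
  · have hpt : 0 < p.toReal := by
      refine ENNReal.toReal_pos (fun h => ?_) hp
      have := (Fact.out : (1:ℝ≥0∞) ≤ p); simp [h] at this
    have := lp.norm_single (E := fun _ : ι => ℂ) (ENNReal.toReal_pos_iff.mp hpt).1 k (1:ℂ)
    simp only [norm_one] at this
    exact this.le

end Aux

/-- Let `K : ℤⁿ × ℤⁿ → ℂ` satisfy
`∑_k (∑_m |K(k,m)|^{p₂})^{r/p₂} < ∞` for some `0 < r ≤ 1` and `1 ≤ p₂ < ∞`.
Then the operator `(A f)(m) = ∑_k f(k) K(k,m)` from `ℓ^{p₁}(ℤⁿ)` to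
`ℓ^{p₂}(ℤⁿ)` is `r`-nuclear, for any `1 ≤ p₁ < ∞`. -/
theorem stmt11 {n : ℕ} (p₁ p₁' p₂ : ℝ≥0∞) [Fact (1 ≤ p₁)] [Fact (1 ≤ p₁')]
    [Fact (1 ≤ p₂)] (hp₁ : p₁ ≠ ⊤) (hp₂ : p₂ ≠ ⊤)
    (hconj : 1 / p₁ + 1 / p₁' = 1)
    (r : ℝ) (hr0 : 0 < r) (hr1 : r ≤ 1)
    (K : (Fin n → ℤ) → (Fin n → ℤ) → ℂ)
    (hrow : ∀ k, Summable fun m => ‖K k m‖ ^ p₂.toReal)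
    (hK : Summable fun k => (∑' m, ‖K k m‖ ^ p₂.toReal) ^ (r / p₂.toReal)) :
    ∃ A : lp (fun _ : Fin n → ℤ => ℂ) p₁ →L[ℂ] lp (fun _ : Fin n → ℤ => ℂ) p₂,
      (∀ (f : lp (fun _ : Fin n → ℤ => ℂ) p₁) (m : Fin n → ℤ),
        (A f : (Fin n → ℤ) → ℂ) m = ∑' k, f k * K k m) ∧
      IsRNuclear p₁ p₁' p₂ r A := by
  haveI : Encodable (Fin n → ℤ) := Encodable.ofCountable _
  have hpt : 0 < p₂.toReal := by
    refine ENNReal.toReal_pos (fun h => ?_) hp₂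
    have := (Fact.out : (1:ℝ≥0∞) ≤ p₂); simp [h] at this
  -- rows as elements of ℓ^{p₂}
  set g0 : (Fin n → ℤ) → lp (fun _ : Fin n → ℤ => ℂ) p₂ :=
    fun k => ⟨K k, memℓp_gen (hrow k)⟩ with hg0
  have hg0coe : ∀ k m, (g0 k : (Fin n → ℤ) → ℂ) m = K k m := fun k m => rfl
  -- summability of ‖g0 k‖ ^ r
  have hKr : Summable fun k => ‖g0 k‖ ^ r := by
    refine hK.congr fun k => ?_
    have h1 : ‖g0 k‖ ^ p₂.toReal = ∑' m, ‖K k m‖ ^ p₂.toReal := lp.norm_rpow_eq_tsum hpt (g0 k)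
    rw [← h1, ← Real.rpow_mul (norm_nonneg _)]
    congr 1
    field_simp
  -- summability of norms
  have hg1 : Summable fun k => ‖g0 k‖ := by
    refine Summable.of_norm_bounded_eventually hKr ?_
    have hsmall : ∀ᶠ k in Filter.cofinite, ‖g0 k‖ ^ r ≤ 1 :=
      hKr.tendsto_cofinite_zero.eventually_le_const (by norm_num : (0:ℝ) < 1)
    refine hsmall.mono fun k hk => ?_
    rw [Real.norm_eq_abs, abs_of_nonneg (norm_nonneg _)]
    rcases eq_or_lt_of_le (norm_nonneg (g0 k)) with h0 | h0
    · rw [← h0, Real.zero_rpow hr0.ne']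
    · have hle1 : ‖g0 k‖ ≤ 1 := by
        by_contra hgt
        push_neg at hgt
        exact absurd hk (not_le.mpr (Real.one_lt_rpow_iff_of_pos h0 |>.mpr (Or.inl ⟨hgt, hr0⟩)))
      calc ‖g0 k‖ = ‖g0 k‖ ^ (1:ℝ) := (Real.rpow_one _).symm
        _ ≤ ‖g0 k‖ ^ r := Real.rpow_le_rpow_of_exponent_ge h0 hle1 hr1
  -- rank one operators
  set T : (Fin n → ℤ) → (lp (fun _ : Fin n → ℤ => ℂ) p₁ →L[ℂ] lp (fun _ : Fin n → ℤ => ℂ) p₂) :=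
    fun k => (evalCLM p₁ k).smulRight (g0 k) with hTdef
  have hTnorm : ∀ k, ‖T k‖ ≤ ‖g0 k‖ := by
    intro k
    rw [hTdef]
    calc ‖(evalCLM p₁ k).smulRight (g0 k)‖ = ‖evalCLM p₁ k‖ * ‖g0 k‖ :=
          ContinuousLinearMap.norm_smulRight_apply _ _
      _ ≤ 1 * ‖g0 k‖ := by gcongr; exact evalCLM_norm_le _ _
      _ = ‖g0 k‖ := one_mul _
  have hT : Summable T := by
    refine Summable.of_norm ?_
    exact Summable.of_nonneg_of_le (fun k => norm_nonneg _) hTnorm hg1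
  have hmain : ∀ (f : lp (fun _ : Fin n → ℤ => ℂ) p₁) (m : Fin n → ℤ),
      ((∑' k, T k) f : (Fin n → ℤ) → ℂ) m = ∑' k, f k * K k m := by
    intro f m
    have hTf : Summable fun k => T k f :=
      hT.map (ContinuousLinearMap.apply ℂ (lp (fun _ : Fin n → ℤ => ℂ) p₂) f)
        (ContinuousLinearMap.apply ℂ (lp (fun _ : Fin n → ℤ => ℂ) p₂) f).continuous
    have h2 : (∑' k, T k) f = ∑' k, T k f :=
      ContinuousLinearMap.map_tsum (ContinuousLinearMap.apply ℂ _ f) hT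
    have h3 : ((∑' k, T k f : lp (fun _ : Fin n → ℤ => ℂ) p₂) : (Fin n → ℤ) → ℂ) m
        = ∑' k, (T k f : (Fin n → ℤ) → ℂ) m := by
      have := ContinuousLinearMap.map_tsum (evalCLM p₂ m) hTf
      simpa using this
    rw [h2, h3]
    refine tsum_congr fun k => ?_
    rw [hTdef]
    simp only [ContinuousLinearMap.smulRight_apply, evalCLM_apply]
    rw [lp.coeFn_smul]
    simp [hg0coe, smul_eq_mul]
  refine ⟨∑' k, T k, hmain, ?_⟩
  classical
  -- the nuclear decomposition
  set g : ℕ → lp (fun _ : Fin n → ℤ => ℂ) p₂ :=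
    fun j => (Encodable.decode₂ (Fin n → ℤ) j).elim 0 g0 with hgdef
  set h : ℕ → lp (fun _ : Fin n → ℤ => ℂ) p₁' :=
    fun j => (Encodable.decode₂ (Fin n → ℤ) j).elim 0 (fun k => lp.single p₁' k 1) with hhdef
  have hnone : ∀ j : ℕ, j ∉ Set.range (Encodable.encode : (Fin n → ℤ) → ℕ) →
      Encodable.decode₂ (Fin n → ℤ) j = none := by
    intro j hj
    cases hd : Encodable.decode₂ (Fin n → ℤ) j with
    | none => rfl
    | some a => exact absurd ⟨a, (Encodable.mem_decode₂.mp hd)⟩ hj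
  refine ⟨g, h, fun f m => ?_, ?_⟩
  · rw [hmain f m]
    have hinner : ∀ k₀ : Fin n → ℤ,
        (∑' k, ((lp.single p₁' k₀ 1 : lp (fun _ : Fin n → ℤ => ℂ) p₁') : (Fin n → ℤ) → ℂ) k * f k)
          = f k₀ := by
      intro k₀
      rw [tsum_eq_single k₀ (fun k' hk' => by rw [lp.single_apply_ne _ _ _ hk', zero_mul])]
      rw [lp.single_apply_self, one_mul]
    have hsupp : Function.support (fun j : ℕ => (g j : (Fin n → ℤ) → ℂ) m * ∑' k, (h j : (Fin n → ℤ) → ℂ) k * f k)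
        ⊆ Set.range (Encodable.encode : (Fin n → ℤ) → ℕ) := by
      intro j hj
      by_contra hjr
      apply hj
      simp only [hgdef, hhdef, hnone j hjr, Option.elim]
      rw [lp.coeFn_zero]
      simp
    rw [← Encodable.encode_injective.tsum_eq hsupp]
    refine tsum_congr fun k => ?_
    simp only [hgdef, hhdef, Encodable.decode₂_encode, Option.elim]
    rw [hinner k]
    exact mul_comm _ _
  · have hvanish : ∀ j : ℕ, j ∉ Set.range (Encodable.encode : (Fin n → ℤ) → ℕ) →
        ‖g j‖ ^ r * ‖h j‖ ^ r = 0 := by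
      intro j hj
      simp only [hgdef, hnone j hj, Option.elim, norm_zero, Real.zero_rpow hr0.ne', zero_mul]
    refine (Encodable.encode_injective.summable_iff hvanish).mp ?_
    refine Summable.of_nonneg_of_le
      (fun k => mul_nonneg (Real.rpow_nonneg (norm_nonneg _) _) (Real.rpow_nonneg (norm_nonneg _) _))
      (fun k => ?_) hKr
    simp only [Function.comp, hgdef, hhdef, Encodable.decode₂_encode, Option.elim]
    have h1 : ‖(lp.single p₁' k 1 : lp (fun _ : Fin n → ℤ => ℂ) p₁')‖ ^ r ≤ 1 :=
      Real.rpow_le_one (norm_nonneg _) (norm_lp_single_one_le p₁' k) hr0.le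
    calc ‖g0 k‖ ^ r * ‖(lp.single p₁' k 1 : lp (fun _ : Fin n → ℤ => ℂ) p₁')‖ ^ r
        ≤ ‖g0 k‖ ^ r * 1 :=
          mul_le_mul_of_nonneg_left h1 (Real.rpow_nonneg (norm_nonneg _) _)
      _ = ‖g0 k‖ ^ r := mul_one _
end

section
/- Let $K:\mathbb{Z}^n\times\mathbb{Z}^n\to\mathbb{C}$ satisfy $|K(k,m)|\le C(k)\omega(m)$ with $C\in\ell^r(\mathbb{Z}^n)$ and $\omega\in\ell^{p_2}(\mathbb{Z}^n)$, for some $0<r\le1$ and $1\le p_2<\infty$. Then the operator $(Af)(m)=\sum_k f(k)K(k,m)$ from $\ell^{p_1}(\mathbb{Z}^n)$ to $\ell^{p_2}(\mathbb{Z}^n)$ is $r$-nuclear for any $1\le p_1<\infty$. -/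
open scoped ENNReal

private lemma aux_mem {ι : Type*} {p : ℝ≥0∞} (hp : 0 < p.toReal)
    {ω : ι → ℝ} (hω0 : ∀ m, 0 ≤ ω m) (hωp : Summable fun m => ω m ^ p.toReal)
    {F : ι → ℂ} {M : ℝ} (hM : 0 ≤ M) (hF : ∀ m, ‖F m‖ ≤ M * ω m) :
    Memℓp F p := by
  apply memℓp_gen
  refine Summable.of_nonneg_of_le (fun m => Real.rpow_nonneg (norm_nonneg _) _)
    (fun m => Real.rpow_le_rpow (norm_nonneg _) (hF m) hp.le) ?_
  refine (hωp.mul_left (M ^ p.toReal)).congr fun m => ?_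
  rw [Real.mul_rpow hM (hω0 m)]

private lemma aux_norm {ι : Type*} {p : ℝ≥0∞} [Fact (1 ≤ p)] (hp : 0 < p.toReal)
    {ω : ι → ℝ} (hω0 : ∀ m, 0 ≤ ω m) (hωp : Summable fun m => ω m ^ p.toReal)
    {M : ℝ} (hM : 0 ≤ M) (f : lp (fun _ : ι => ℂ) p)
    (hF : ∀ m, ‖f m‖ ≤ M * ω m) :
    ‖f‖ ≤ M * (∑' m, ω m ^ p.toReal) ^ (1 / p.toReal) := by
  set S : ℝ := ∑' m, ω m ^ p.toReal with hS
  have hS0 : 0 ≤ S := tsum_nonneg fun m => Real.rpow_nonneg (hω0 m) _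
  have hW0 : 0 ≤ S ^ (1 / p.toReal) := Real.rpow_nonneg hS0 _
  refine lp.norm_le_of_tsum_le hp (mul_nonneg hM hW0) ?_
  have hsum2 : Summable fun m => (M * ω m) ^ p.toReal :=
    (hωp.mul_left (M ^ p.toReal)).congr fun m => (Real.mul_rpow hM (hω0 m)).symm
  have h1 : ∑' m, ‖f m‖ ^ p.toReal ≤ ∑' m, (M * ω m) ^ p.toReal :=
    Summable.tsum_le_tsum (fun m => Real.rpow_le_rpow (norm_nonneg _) (hF m) hp.le)
      ((lp.memℓp f).summable hp) hsum2
  have h2 : ∑' m, (M * ω m) ^ p.toReal = M ^ p.toReal * S := by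
    rw [hS, ← tsum_mul_left]
    exact tsum_congr fun m => Real.mul_rpow hM (hω0 m)
  have h3 : (M * S ^ (1 / p.toReal)) ^ p.toReal = M ^ p.toReal * S := by
    rw [Real.mul_rpow hM hW0, ← Real.rpow_mul hS0, one_div,
      inv_mul_cancel₀ hp.ne', Real.rpow_one]
  rw [h3]
  calc ∑' m, ‖f m‖ ^ p.toReal ≤ ∑' m, (M * ω m) ^ p.toReal := h1
    _ = M ^ p.toReal * S := h2

set_option maxHeartbeats 2000000 in
/-- Let `K : ℤⁿ × ℤⁿ → ℂ` satisfy `|K(k,m)| ≤ C(k) ω(m)` with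
`C ∈ ℓʳ(ℤⁿ)` and `ω ∈ ℓ^{p₂}(ℤⁿ)` nonnegative, for some `0 < r ≤ 1` and
`1 ≤ p₂ < ∞`. Then the operator `(A f)(m) = ∑_k f(k) K(k,m)` from
`ℓ^{p₁}(ℤⁿ)` to `ℓ^{p₂}(ℤⁿ)` is `r`-nuclear for any `1 ≤ p₁ < ∞`. -/
theorem stmt12 {n : ℕ} (p₁ p₁' p₂ : ℝ≥0∞) [Fact (1 ≤ p₁)] [Fact (1 ≤ p₁')]
    [Fact (1 ≤ p₂)] (hp₁ : p₁ ≠ ⊤) (hp₂ : p₂ ≠ ⊤)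
    (hconj : 1 / p₁ + 1 / p₁' = 1)
    (r : ℝ) (hr0 : 0 < r) (hr1 : r ≤ 1)
    (K : (Fin n → ℤ) → (Fin n → ℤ) → ℂ)
    (C ω : (Fin n → ℤ) → ℝ)
    (hC0 : ∀ k, 0 ≤ C k) (hω0 : ∀ m, 0 ≤ ω m)
    (hCr : Summable fun k => C k ^ r)
    (hωp : Summable fun m => ω m ^ p₂.toReal)
    (hK : ∀ k m, ‖K k m‖ ≤ C k * ω m) :
    ∃ A : lp (fun _ : Fin n → ℤ => ℂ) p₁ →L[ℂ] lp (fun _ : Fin n → ℤ => ℂ) p₂,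
      (∀ (f : lp (fun _ : Fin n → ℤ => ℂ) p₁) (m : Fin n → ℤ),
        (A f : (Fin n → ℤ) → ℂ) m = ∑' k, f k * K k m) ∧
      IsRNuclear p₁ p₁' p₂ r A := by
  classical
  haveI : Encodable (Fin n → ℤ) := Encodable.ofCountable _
  have hp1ne : p₁ ≠ 0 := (zero_lt_one.trans_le (Fact.out : 1 ≤ p₁)).ne'
  have hp2 : 0 < p₂.toReal :=
    ENNReal.toReal_pos (zero_lt_one.trans_le (Fact.out : 1 ≤ p₂)).ne' hp₂
  set W : ℝ := (∑' m, ω m ^ p₂.toReal) ^ (1 / p₂.toReal) with hWdef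
  have hW0 : 0 ≤ W := by
    rw [hWdef]
    exact Real.rpow_nonneg (tsum_nonneg fun m => Real.rpow_nonneg (hω0 m) _) _
  -- C is summable
  have hCsum : Summable C := by
    have hev : ∀ᶠ k in Filter.cofinite, C k ^ r < 1 :=
      hCr.tendsto_cofinite_zero.eventually (gt_mem_nhds one_pos)
    refine Summable.of_norm_bounded_eventually hCr ?_
    filter_upwards [hev] with k hk
    rw [Real.norm_of_nonneg (hC0 k)]
    rcases eq_or_lt_of_le (hC0 k) with h0 | h0
    · rw [← h0]; exact Real.rpow_nonneg le_rfl r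
    · have hle1 : C k ≤ 1 := by
        by_contra hgt
        push_neg at hgt
        exact absurd hk (not_lt.2 (Real.one_le_rpow hgt.le hr0.le))
      calc C k = C k ^ (1 : ℝ) := (Real.rpow_one _).symm
        _ ≤ C k ^ r := Real.rpow_le_rpow_of_exponent_ge h0 hle1 hr1
  set SC : ℝ := ∑' k, C k with hSCdef
  have hSC0 : 0 ≤ SC := tsum_nonneg hC0
  have hCle : ∀ k, C k ≤ SC := fun k => Summable.le_tsum hCsum k fun k' _ => hC0 k'
  -- rows of K as lp elements
  have memK : ∀ k : (Fin n → ℤ), Memℓp (fun m => K k m) p₂ := fun k =>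
    aux_mem hp2 hω0 hωp (hC0 k) (hK k)
  set gK : (Fin n → ℤ) → lp (fun _ : (Fin n → ℤ) => ℂ) p₂ := fun k => ⟨fun m => K k m, memK k⟩ with hgK
  have gK_apply : ∀ k m, (gK k : (Fin n → ℤ) → ℂ) m = K k m := fun _ _ => rfl
  have gK_norm : ∀ k, ‖gK k‖ ≤ C k * W := fun k =>
    aux_norm hp2 hω0 hωp (hC0 k) (gK k) (hK k)
  -- summability of the kernel sum
  have hfle : ∀ (f : lp (fun _ : (Fin n → ℤ) => ℂ) p₁) (k : (Fin n → ℤ)), ‖f k‖ ≤ ‖f‖ := fun f k =>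
    lp.norm_apply_le_norm hp1ne f k
  have hsum : ∀ (f : lp (fun _ : (Fin n → ℤ) => ℂ) p₁) (m : (Fin n → ℤ)),
      Summable fun k => (f : (Fin n → ℤ) → ℂ) k * K k m := by
    intro f m
    refine Summable.of_norm_bounded (g := fun k => ‖f‖ * ω m * C k)
      (hCsum.mul_left _) fun k => ?_
    rw [norm_mul]
    calc ‖(f : (Fin n → ℤ) → ℂ) k‖ * ‖K k m‖ ≤ ‖f‖ * (C k * ω m) :=
          mul_le_mul (hfle f k) (hK k m) (norm_nonneg _) (norm_nonneg _)
      _ = ‖f‖ * ω m * C k := by ring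
  have hFb : ∀ (f : lp (fun _ : (Fin n → ℤ) => ℂ) p₁) (m : (Fin n → ℤ)),
      ‖∑' k, (f : (Fin n → ℤ) → ℂ) k * K k m‖ ≤ ‖f‖ * SC * ω m := by
    intro f m
    have hns : Summable fun k => ‖(f : (Fin n → ℤ) → ℂ) k * K k m‖ := by
      refine Summable.of_nonneg_of_le (fun k => norm_nonneg _) (fun k => ?_)
        (hCsum.mul_left (‖f‖ * ω m))
      rw [norm_mul]
      calc ‖(f : (Fin n → ℤ) → ℂ) k‖ * ‖K k m‖ ≤ ‖f‖ * (C k * ω m) :=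
            mul_le_mul (hfle f k) (hK k m) (norm_nonneg _) (norm_nonneg _)
        _ = ‖f‖ * ω m * C k := by ring
    calc ‖∑' k, (f : (Fin n → ℤ) → ℂ) k * K k m‖ ≤ ∑' k, ‖(f : (Fin n → ℤ) → ℂ) k * K k m‖ :=
          norm_tsum_le_tsum_norm hns
      _ ≤ ∑' k, ‖f‖ * ω m * C k := by
          refine Summable.tsum_le_tsum (fun k => ?_) hns (hCsum.mul_left _)
          rw [norm_mul]
          calc ‖(f : (Fin n → ℤ) → ℂ) k‖ * ‖K k m‖ ≤ ‖f‖ * (C k * ω m) :=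
                mul_le_mul (hfle f k) (hK k m) (norm_nonneg _) (norm_nonneg _)
            _ = ‖f‖ * ω m * C k := by ring
      _ = ‖f‖ * ω m * SC := by rw [tsum_mul_left]
      _ = ‖f‖ * SC * ω m := by ring
  have memF : ∀ f : lp (fun _ : (Fin n → ℤ) => ℂ) p₁,
      Memℓp (fun m => ∑' k, (f : (Fin n → ℤ) → ℂ) k * K k m) p₂ := fun f =>
    aux_mem hp2 hω0 hωp (mul_nonneg (norm_nonneg f) hSC0) (hFb f)
  -- the linear map
  set Tlin : lp (fun _ : (Fin n → ℤ) => ℂ) p₁ →ₗ[ℂ] lp (fun _ : (Fin n → ℤ) => ℂ) p₂ :=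
    { toFun := fun f => ⟨fun m => ∑' k, (f : (Fin n → ℤ) → ℂ) k * K k m, memF f⟩
      map_add' := by
        intro f g
        apply Subtype.ext
        funext m
        have h1 : ((f + g : lp (fun _ : (Fin n → ℤ) => ℂ) p₁) : (Fin n → ℤ) → ℂ) = (f : (Fin n → ℤ) → ℂ) + g :=
          lp.coeFn_add f g
        show ∑' k, ((f + g : lp (fun _ : (Fin n → ℤ) => ℂ) p₁) : (Fin n → ℤ) → ℂ) k * K k m = _
        rw [h1]
        have : ∀ k : (Fin n → ℤ), ((f : (Fin n → ℤ) → ℂ) + g) k * K k m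
            = (f : (Fin n → ℤ) → ℂ) k * K k m + (g : (Fin n → ℤ) → ℂ) k * K k m := by
          intro k; simp [add_mul]
        rw [tsum_congr this, Summable.tsum_add (hsum f m) (hsum g m)]
        rfl
      map_smul' := by
        intro c f
        apply Subtype.ext
        funext m
        have h1 : ((c • f : lp (fun _ : (Fin n → ℤ) => ℂ) p₁) : (Fin n → ℤ) → ℂ) = c • (f : (Fin n → ℤ) → ℂ) :=
          lp.coeFn_smul c f
        show ∑' k, ((c • f : lp (fun _ : (Fin n → ℤ) => ℂ) p₁) : (Fin n → ℤ) → ℂ) k * K k m = _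
        rw [h1]
        have : ∀ k : (Fin n → ℤ), (c • (f : (Fin n → ℤ) → ℂ)) k * K k m
            = c * ((f : (Fin n → ℤ) → ℂ) k * K k m) := by
          intro k; simp [mul_assoc]
        rw [tsum_congr this, tsum_mul_left]
        rfl } with hTlin
  have hTbound : ∀ f, ‖Tlin f‖ ≤ SC * W * ‖f‖ := by
    intro f
    have := aux_norm hp2 hω0 hωp (mul_nonneg (norm_nonneg f) hSC0) (Tlin f)
      (fun m => hFb f m)
    calc ‖Tlin f‖ ≤ ‖f‖ * SC * W := this
      _ = SC * W * ‖f‖ := by ring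
  set A : lp (fun _ : (Fin n → ℤ) => ℂ) p₁ →L[ℂ] lp (fun _ : (Fin n → ℤ) => ℂ) p₂ :=
    Tlin.mkContinuous (SC * W) hTbound with hA
  have hAapp : ∀ (f : lp (fun _ : (Fin n → ℤ) => ℂ) p₁) (m : (Fin n → ℤ)),
      (A f : (Fin n → ℤ) → ℂ) m = ∑' k, (f : (Fin n → ℤ) → ℂ) k * K k m := fun f m => rfl
  refine ⟨A, hAapp, ?_⟩
  -- nuclearity
  set g : ℕ → lp (fun _ : (Fin n → ℤ) => ℂ) p₂ :=
    fun j => (Encodable.decode₂ (Fin n → ℤ) j).elim 0 gK with hg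
  set sing : (Fin n → ℤ) → lp (fun _ : (Fin n → ℤ) => ℂ) p₁' :=
    fun k => lp.single p₁' k 1 with hsingdef
  set h : ℕ → lp (fun _ : (Fin n → ℤ) => ℂ) p₁' :=
    fun j => (Encodable.decode₂ (Fin n → ℤ) j).elim 0 sing with hhdef
  have hsing : ∀ k : (Fin n → ℤ), ‖sing k‖ ≤ 1 := by
    intro k
    rw [hsingdef]
    rcases eq_or_ne p₁' ⊤ with hp' | hp'
    · subst hp'
      refine lp.norm_le_of_forall_le zero_le_one fun k' => ?_
      rcases eq_or_ne k' k with rfl | hne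
      · rw [lp.single_apply_self]; simp
      · rw [lp.single_apply_ne _ _ _ hne]; simp
    · have hpos : 0 < p₁'.toReal :=
        ENNReal.toReal_pos (zero_lt_one.trans_le (Fact.out : 1 ≤ p₁')).ne' hp'
      exact le_of_eq (by simpa using lp.norm_single (E := fun _ : (Fin n → ℤ) => ℂ) (zero_lt_one.trans_le (Fact.out : 1 ≤ p₁')) k (1 : ℂ))
  refine ⟨g, h, ?_, ?_⟩
  · intro f m
    set T : ℕ → ℂ := fun j => (g j : (Fin n → ℤ) → ℂ) m * ∑' k : (Fin n → ℤ), (h j : (Fin n → ℤ) → ℂ) k * (f : (Fin n → ℤ) → ℂ) k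
      with hT
    have hTenc : ∀ k : (Fin n → ℤ), T (Encodable.encode k) = K k m * (f : (Fin n → ℤ) → ℂ) k := by
      intro k
      have hd : Encodable.decode₂ (Fin n → ℤ) (Encodable.encode k) = some k :=
        Encodable.decode₂_encode k
      have hge : g (Encodable.encode k) = gK k := by simp only [hg, hd, Option.elim_some]
      have hhe : h (Encodable.encode k) = sing k := by
        simp only [hhdef, hd, Option.elim_some]
      have hinner : (∑' k' : (Fin n → ℤ), (h (Encodable.encode k) : (Fin n → ℤ) → ℂ) k' * (f : (Fin n → ℤ) → ℂ) k')
          = (f : (Fin n → ℤ) → ℂ) k := by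
        rw [hhe, hsingdef]
        rw [tsum_eq_single k (fun k' hk' => by
          rw [lp.single_apply_ne p₁' k _ hk', zero_mul])]
        rw [lp.single_apply_self, one_mul]
      rw [hT]
      show (g (Encodable.encode k) : (Fin n → ℤ) → ℂ) m * _ = _
      rw [hinner, hge, gK_apply]
    have hT0 : ∀ j ∉ Set.range (Encodable.encode : (Fin n → ℤ) → ℕ), T j = 0 := by
      intro j hj
      have hd : Encodable.decode₂ (Fin n → ℤ) j = none := by
        by_contra hne
        exact hj (Encodable.decode₂_ne_none_iff.mp hne)
      have hg0 : g j = 0 := by simp only [hg, hd, Option.elim_none]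
      rw [hT]
      show (g j : (Fin n → ℤ) → ℂ) m * _ = 0
      rw [hg0, lp.coeFn_zero, Pi.zero_apply, zero_mul]
    calc (A f : (Fin n → ℤ) → ℂ) m = ∑' k, (f : (Fin n → ℤ) → ℂ) k * K k m := hAapp f m
      _ = ∑' k : (Fin n → ℤ), K k m * (f : (Fin n → ℤ) → ℂ) k := tsum_congr fun k => mul_comm _ _
      _ = ∑' k : (Fin n → ℤ), T (Encodable.encode k) := (tsum_congr fun k => (hTenc k).symm)
      _ = ∑' j : ℕ, T j := Encodable.encode_injective.tsum_eq
          (Function.support_subset_iff'.mpr hT0)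
  · -- summability
    set B : ℕ → ℝ := fun j => (Encodable.decode₂ (Fin n → ℤ) j).elim 0
      (fun k => C k ^ r * W ^ r) with hB
    have hB0 : ∀ j ∉ Set.range (Encodable.encode : (Fin n → ℤ) → ℕ), B j = 0 := by
      intro j hj
      have hd : Encodable.decode₂ (Fin n → ℤ) j = none := by
        by_contra hne
        exact hj (Encodable.decode₂_ne_none_iff.mp hne)
      simp only [hB, hd, Option.elim_none]
    have hBenc : ∀ k : (Fin n → ℤ), B (Encodable.encode k) = C k ^ r * W ^ r := by
      intro k
      simp only [hB, Encodable.decode₂_encode, Option.elim_some]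
    have hBs : Summable B := by
      refine (Encodable.encode_injective.summable_iff hB0).mp ?_
      exact (hCr.mul_right (W ^ r)).congr fun k => (hBenc k).symm
    refine Summable.of_nonneg_of_le (fun j => mul_nonneg
      (Real.rpow_nonneg (norm_nonneg _) _) (Real.rpow_nonneg (norm_nonneg _) _))
      (fun j => ?_) hBs
    rcases hd : Encodable.decode₂ (Fin n → ℤ) j with _ | k
    · have hg0 : g j = 0 := by simp only [hg, hd, Option.elim_none]
      have hh0 : h j = 0 := by simp only [hhdef, hd, Option.elim_none]
      have hBj : B j = 0 := by simp only [hB, hd, Option.elim_none]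
      rw [hg0, hh0, norm_zero, Real.zero_rpow hr0.ne', zero_mul, hBj]
    · have hge : g j = gK k := by simp only [hg, hd, Option.elim_some]
      have hhe : h j = sing k := by simp only [hhdef, hd, Option.elim_some]
      have hBj : B j = C k ^ r * W ^ r := by simp only [hB, hd, Option.elim_some]
      rw [hge, hhe, hBj]
      have h1 : ‖gK k‖ ^ r ≤ C k ^ r * W ^ r := by
        rw [← Real.mul_rpow (hC0 k) hW0]
        exact Real.rpow_le_rpow (norm_nonneg _) (gK_norm k) hr0.le
      have h2 : ‖sing k‖ ^ r ≤ 1 :=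
        Real.rpow_le_one (norm_nonneg _) (hsing k) hr0.le
      calc ‖gK k‖ ^ r * ‖sing k‖ ^ r
          ≤ (C k ^ r * W ^ r) * 1 := mul_le_mul h1 h2
            (Real.rpow_nonneg (norm_nonneg _) _)
            (mul_nonneg (Real.rpow_nonneg (hC0 k) _) (Real.rpow_nonneg hW0 _))
        _ = C k ^ r * W ^ r := mul_one _
end
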